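/- The Cayley transform C: S → Σ, (q', p') = ((1+p)⁻¹q, (1+p)⁻¹(1-p)), maps the unit sphere S = {(q,p) ∈ ℍⁿ×ℍ : |q|²+|p|² = 1} minus the point (0,-1) bijectively onto the boundary of the Siegel domain Σ = {(q',p') ∈ ℍⁿ×ℍ : Re(p') = |q'|²}, with inverse (q,p) = (2(1+p')⁻¹q', (1+p')⁻¹(1-p')). -/

import Mathlib

open scoped Quaternion

/-- The Cayley transform `(q,p) ↦ ((1+p)⁻¹q, (1+p)⁻¹(1-p))`. -/
noncomputable def cayleyT {n : ℕ} (x : (Fin n → ℍ[ℝ]) × ℍ[ℝ]) :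
    (Fin n → ℍ[ℝ]) × ℍ[ℝ] :=
  (fun α => (1 + x.2)⁻¹ * x.1 α, (1 + x.2)⁻¹ * (1 - x.2))

/-- The inverse Cayley transform `(q',p') ↦ (2(1+p')⁻¹q', (1+p')⁻¹(1-p'))`. -/
noncomputable def cayleyTInv {n : ℕ} (x : (Fin n → ℍ[ℝ]) × ℍ[ℝ]) :
    (Fin n → ℍ[ℝ]) × ℍ[ℝ] :=
  (fun α => 2 * ((1 + x.2)⁻¹ * x.1 α), (1 + x.2)⁻¹ * (1 - x.2))

open Quaternion

lemma h2ne : (2:ℍ[ℝ]) ≠ 0 := by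
  rw [show (2:ℍ[ℝ]) = ((2:ℝ):ℍ[ℝ]) by norm_cast, ← Quaternion.coe_zero, ne_eq,
    Quaternion.coe_inj]
  norm_num

lemma aux0 (a : ℍ[ℝ]) (ha : a ≠ 0) : a⁻¹ * (1 - (a - 1)) = a⁻¹ * 2 - 1 := by
  have h : (1 : ℍ[ℝ]) - (a - 1) = 2 - a := by
    rw [sub_sub_eq_add_sub, one_add_one_eq_two]
  rw [h, mul_sub, inv_mul_cancel₀ ha]

lemma aux1 (a : ℍ[ℝ]) : (1 + (a⁻¹ * 2 - 1))⁻¹ = 2⁻¹ * a := by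
  have h : (1 : ℍ[ℝ]) + (a⁻¹ * 2 - 1) = a⁻¹ * 2 := by
    rw [add_comm, sub_add_cancel]
  rw [h, mul_inv_rev, inv_inv]

lemma aux2 (a : ℍ[ℝ]) (ha : a ≠ 0) : (2⁻¹ * a) * (1 - (a⁻¹ * 2 - 1)) = a - 1 := by
  have h : (1 : ℍ[ℝ]) - (a⁻¹ * 2 - 1) = 2 - a⁻¹ * 2 := by
    rw [sub_sub_eq_add_sub, one_add_one_eq_two]
  have comm : a * (2:ℍ[ℝ]) = 2 * a := by rw [mul_two, two_mul]
  rw [h, mul_sub, mul_assoc 2⁻¹ a 2, comm, ← mul_assoc 2⁻¹ 2 a,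
    inv_mul_cancel₀ h2ne, one_mul, mul_assoc 2⁻¹ a _, ← mul_assoc a a⁻¹ 2,
    mul_inv_cancel₀ ha, one_mul, inv_mul_cancel₀ h2ne]

lemma aux3 (a u : ℍ[ℝ]) (ha : a ≠ 0) : 2 * ((2⁻¹ * a) * (a⁻¹ * u)) = u := by
  rw [mul_assoc 2⁻¹ a _, mul_inv_cancel_left₀ ha, mul_inv_cancel_left₀ h2ne]

lemma aux4 (a u : ℍ[ℝ]) (ha : a ≠ 0) : (2⁻¹ * a) * (2 * (a⁻¹ * u)) = u := by
  have comm : a * (2:ℍ[ℝ]) = 2 * a := by rw [mul_two, two_mul]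
  rw [mul_assoc 2⁻¹ a _, ← mul_assoc a 2 _, comm, mul_assoc 2 a _,
    mul_inv_cancel_left₀ ha, inv_mul_cancel_left₀ h2ne]

lemma aux_re (a : ℍ[ℝ]) : (a⁻¹ * 2 - 1).re = 2 * ((normSq a)⁻¹ * a.re) - 1 := by
  rw [mul_two]
  simp [inv_def]
  ring

lemma aux_ns (a : ℍ[ℝ]) : normSq (a⁻¹ * 2 - 1) =
    4 * (normSq a)⁻¹ - 4 * ((normSq a)⁻¹ * a.re) + 1 := by
  have h2 : normSq ((2:ℍ[ℝ])) = 4 := by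
    rw [show (2:ℍ[ℝ]) = ((2:ℝ):ℍ[ℝ]) by norm_cast, normSq_coe]; norm_num
  have hc : normSq (a⁻¹ * 2) = 4 * (normSq a)⁻¹ := by
    rw [map_mul, map_inv₀, h2]; ring
  have hre : (a⁻¹ * 2).re = 2 * ((normSq a)⁻¹ * a.re) := by
    rw [mul_two]; simp [inv_def]; ring
  have h : normSq (a⁻¹ * 2 - 1) = normSq (a⁻¹*2) - 2 * (a⁻¹*2).re + 1 := by
    simp [normSq_def']
    ring
  rw [h, hc, hre]; ring

lemma aux_ns_add (p : ℍ[ℝ]) : normSq (1 + p) = 1 + 2 * p.re + normSq p := by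
  simp [normSq_def']
  ring

lemma hns2 : normSq ((2:ℍ[ℝ])) = 4 := by
  rw [show (2:ℍ[ℝ]) = ((2:ℝ):ℍ[ℝ]) by norm_cast, normSq_coe]; norm_num

/-- The Cayley transform maps the unit sphere `S = {|q|²+|p|² = 1}` minus the point
`(0,-1)` bijectively onto the boundary `Σ = {Re p' = |q'|²}` of the Siegel domain, with
the indicated inverse. -/
theorem cayley_bijection {n : ℕ} :
    (∀ x : (Fin n → ℍ[ℝ]) × ℍ[ℝ],
      (∑ α, Quaternion.normSq (x.1 α)) + Quaternion.normSq x.2 = 1 → x.2 ≠ -1 →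
        ((cayleyT x).2.re = ∑ α, Quaternion.normSq ((cayleyT x).1 α)) ∧
        cayleyTInv (cayleyT x) = x) ∧
    (∀ x : (Fin n → ℍ[ℝ]) × ℍ[ℝ],
      x.2.re = (∑ α, Quaternion.normSq (x.1 α)) →
        ((∑ α, Quaternion.normSq ((cayleyTInv x).1 α)) +
            Quaternion.normSq ((cayleyTInv x).2) = 1) ∧
        cayleyTInv x ≠ (0, -1) ∧
        cayleyT (cayleyTInv x) = x) := by
  constructor
  · rintro ⟨q, p⟩ hs hp
    have ha : (1 + p) ≠ 0 := by
      intro h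
      apply hp
      exact eq_neg_of_add_eq_zero_right h
    have hT2 : (1 + p)⁻¹ * (1 - p) = (1 + p)⁻¹ * 2 - 1 := by
      have := aux0 (1 + p) ha
      rwa [add_sub_cancel_left] at this
    have hsne : normSq (1 + p) ≠ 0 := normSq_ne_zero.2 ha
    constructor
    · simp only [cayleyT]
      rw [hT2, aux_re]
      simp only [map_mul, map_inv₀]
      rw [← Finset.mul_sum]
      have hns := aux_ns_add p
      have hre1 : (1 + p).re = 1 + p.re := by simp
      rw [hre1]
      field_simp
      linarith [hns, hs]
    · simp only [cayleyT, cayleyTInv, Prod.mk.injEq]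
      constructor
      · funext α
        rw [hT2, aux1, aux3 _ _ ha]
      · rw [hT2, aux1, aux2 _ ha, add_sub_cancel_left]
  · rintro ⟨q, p⟩ hre
    replace hre : p.re = ∑ α, normSq (q α) := hre
    have hS : (0:ℝ) ≤ ∑ α, normSq (q α) :=
      Finset.sum_nonneg fun _ _ => normSq_nonneg
    have hbre : (1 + p).re = 1 + ∑ α, normSq (q α) := by simp [hre]
    have hb : (1 + p) ≠ 0 := by
      intro h
      rw [h] at hbre
      simp at hbre
      linarith
    have hsne : normSq (1 + p) ≠ 0 := normSq_ne_zero.2 hb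
    have hT2 : (1 + p)⁻¹ * (1 - p) = (1 + p)⁻¹ * 2 - 1 := by
      have := aux0 (1 + p) hb
      rwa [add_sub_cancel_left] at this
    refine ⟨?_, ?_, ?_⟩
    · simp only [cayleyTInv]
      rw [hT2, aux_ns]
      simp only [map_mul, map_inv₀, hns2]
      rw [show ∑ α, 4 * ((normSq (1+p))⁻¹ * normSq (q α))
          = 4 * ((normSq (1+p))⁻¹ * ∑ α, normSq (q α)) by
        rw [Finset.mul_sum, Finset.mul_sum]]
      rw [hbre]
      field_simp
      ring
    · intro h
      have h2 := congrArg Prod.snd h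
      simp only [cayleyTInv] at h2
      rw [hT2, sub_eq_iff_eq_add, neg_add_cancel] at h2
      rcases mul_eq_zero.1 h2 with h' | h'
      · exact inv_ne_zero hb h'
      · exact h2ne h'
    · simp only [cayleyT, cayleyTInv, Prod.mk.injEq]
      constructor
      · funext α
        rw [hT2, aux1, aux4 _ _ hb]
      · rw [hT2, aux1, aux2 _ hb, add_sub_cancel_left]
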